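/- arXiv:2212.09841 — 11 statements merged into one kernel-verified Lean document; each statement's English description precedes it below -/
import Mathlib

section
/- Let N, p, s, t be natural numbers and let V be a linear subspace of the space of N×N real matrices with finrank equal to p. If (s + t) * N < p, then for every family of vectors x : Fin s → (Fin N → ℝ) and w : Fin t → (Fin N → ℝ) there exist matrices A and B in V with A ≠ B such that A *ᵥ (x i) = B *ᵥ (x i) for all i : Fin s and Aᵀ *ᵥ (w j) = Bᵀ *ᵥ (w j) for all j : Fin t. (Hence a linearly parametrized family of N×N matrices with p parameters cannot be uniquely recovered from fewer than ⌈p/N⌉ matrix-vector product queries.) -/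
open Matrix

theorem stmt0 (N p s t : ℕ) (V : Submodule ℝ (Matrix (Fin N) (Fin N) ℝ))
    (hV : Module.finrank ℝ V = p) (h : (s + t) * N < p)
    (x : Fin s → (Fin N → ℝ)) (w : Fin t → (Fin N → ℝ)) :
    ∃ A B : Matrix (Fin N) (Fin N) ℝ, A ∈ V ∧ B ∈ V ∧ A ≠ B ∧
      (∀ i : Fin s, A *ᵥ x i = B *ᵥ x i) ∧
      (∀ j : Fin t, Aᵀ *ᵥ w j = Bᵀ *ᵥ w j) := by
  set f : V →ₗ[ℝ] ((Fin s → Fin N → ℝ) × (Fin t → Fin N → ℝ)) :=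
    { toFun := fun M => (fun i => (M : Matrix (Fin N) (Fin N) ℝ) *ᵥ x i,
        fun j => (M : Matrix (Fin N) (Fin N) ℝ)ᵀ *ᵥ w j)
      map_add' := by
        intro M M'
        ext <;> simp [Matrix.add_mulVec, Matrix.transpose_add]
      map_smul' := by
        intro c M
        ext <;> simp [Matrix.smul_mulVec, Matrix.transpose_smul] } with hf
  have hni : ¬ Function.Injective f := by
    intro hinj
    have := LinearMap.finrank_le_finrank_of_injective hinj
    rw [hV] at this
    have hcod : Module.finrank ℝ ((Fin s → Fin N → ℝ) × (Fin t → Fin N → ℝ))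
        = (s + t) * N := by
      simp [Module.finrank_prod, Module.finrank_pi_fintype, Module.finrank_pi, Finset.sum_const, add_mul, mul_comm]; ring
    omega
  rw [Function.not_injective_iff] at hni
  obtain ⟨A, B, hAB, hne⟩ := hni
  refine ⟨A, B, A.2, B.2, ?_, ?_, ?_⟩
  · intro hc; exact hne (Subtype.ext hc)
  · intro i; exact congrFun (congrArg Prod.fst hAB) i
  · intro j; exact congrFun (congrArg Prod.snd hAB) j
end

section
/- Let N and k be natural numbers with 1 ≤ k < N, and let k₁, k₂ be natural numbers with min(k₁,k₂) < k and max(k₁,k₂) < N. Let X : Matrix (Fin N) (Fin k₁) ℝ and W : Matrix (Fin N) (Fin k₂) ℝ have orthonormal columns, i.e., Xᵀ * X = 1 and Wᵀ * W = 1. Then for every matrix A : Matrix (Fin N) (Fin N) ℝ with rank A ≤ k, there exists a matrix B : Matrix (Fin N) (Fin N) ℝ with B ≠ A, rank B ≤ k, B * X = A * X, and Bᵀ * W = Aᵀ * W. (Thus a rank-≤k matrix is never uniquely determined by k₁ queries to A and k₂ queries to Aᵀ under these conditions.) -/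
open Matrix

lemma exists_ker {m N : ℕ} (h : m < N) (M : Matrix (Fin m) (Fin N) ℝ) :
    ∃ u : Fin N → ℝ, u ≠ 0 ∧ M *ᵥ u = 0 := by
  have : LinearMap.ker M.mulVecLin ≠ ⊥ := by
    intro hb
    have hinj : Function.Injective M.mulVecLin := LinearMap.ker_eq_bot.mp hb
    have := LinearMap.finrank_le_finrank_of_injective hinj
    simp [Module.finrank_fin_fun] at this
    omega
  obtain ⟨u, hu, hu0⟩ := Submodule.exists_mem_ne_zero_of_ne_bot this
  exact ⟨u, hu0, hu⟩

set_option maxHeartbeats 1000000 in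
lemma rank_add_vecMulVec_le {N : ℕ} (A : Matrix (Fin N) (Fin N) ℝ) (u v : Fin N → ℝ) :
    (A + vecMulVec u v).rank ≤ A.rank + 1 := by
  have h1 : LinearMap.range (A + vecMulVec u v).mulVecLin ≤
      LinearMap.range A.mulVecLin ⊔ (ℝ ∙ u) := by
    rintro x ⟨y, rfl⟩
    have : (A + vecMulVec u v).mulVecLin y = A *ᵥ y + (v ⬝ᵥ y) • u := by
      simp only [mulVecLin_apply, add_mulVec]
      congr 1
      ext i
      simp only [vecMulVec, mulVec, dotProduct, of_apply, Pi.smul_apply, smul_eq_mul,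
        Finset.sum_mul]
      exact Finset.sum_congr rfl fun j _ => by ring
    rw [this, ← A.mulVecLin_apply]
    exact Submodule.add_mem_sup (LinearMap.mem_range_self _ y)
      (Submodule.smul_mem _ _ (Submodule.mem_span_singleton_self u))
  calc (A + vecMulVec u v).rank ≤ Module.finrank ℝ ((LinearMap.range A.mulVecLin ⊔ (ℝ ∙ u) : Submodule ℝ (Fin N → ℝ)) : Submodule ℝ (Fin N → ℝ)) :=
        Submodule.finrank_mono h1
    _ ≤ A.rank + Module.finrank ℝ (ℝ ∙ u) := by
        have := Submodule.finrank_sup_add_finrank_inf_eq (LinearMap.range A.mulVecLin) (ℝ ∙ u)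
        unfold Matrix.rank
        omega
    _ ≤ A.rank + 1 := by
        gcongr
        simpa using finrank_span_le_card ({u} : Set (Fin N → ℝ))

lemma shared {N k₁ k₂ : ℕ} (X : Matrix (Fin N) (Fin k₁) ℝ) (W : Matrix (Fin N) (Fin k₂) ℝ)
    (A : Matrix (Fin N) (Fin N) ℝ) (u v : Fin N → ℝ) (hu : u ≠ 0) (hv : v ≠ 0)
    (huW : Wᵀ *ᵥ u = 0) (hvX : Xᵀ *ᵥ v = 0) :
    A + vecMulVec u v ≠ A ∧ (A + vecMulVec u v) * X = A * X ∧
      (A + vecMulVec u v)ᵀ * W = Aᵀ * W := by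
  obtain ⟨i, hi⟩ := Function.ne_iff.mp hu
  obtain ⟨j, hj⟩ := Function.ne_iff.mp hv
  refine ⟨?_, ?_, ?_⟩
  · intro h
    have := congrFun (congrFun h i) j
    simp only [Matrix.add_apply, vecMulVec, of_apply] at this
    have : u i * v j = 0 := by linarith
    rcases mul_eq_zero.mp this with h' | h' <;> simp_all
  · rw [Matrix.add_mul, add_eq_left]
    ext a b
    have hb : (Xᵀ *ᵥ v) b = 0 := by rw [hvX]; rfl
    simp only [mulVec, dotProduct, transpose_apply] at hb
    simp only [mul_apply, vecMulVec, of_apply, Matrix.zero_apply, mul_assoc, ← Finset.mul_sum]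
    rw [show ∑ l, v l * X l b = 0 from by rw [← hb]; exact Finset.sum_congr rfl fun l _ => mul_comm _ _]
    ring
  · rw [transpose_add, Matrix.add_mul, add_eq_left]
    ext a b
    have hb : (Wᵀ *ᵥ u) b = 0 := by rw [huW]; rfl
    simp only [mulVec, dotProduct, transpose_apply] at hb
    simp only [mul_apply, transpose_apply, vecMulVec, of_apply, Matrix.zero_apply]
    rw [show (0:ℝ) = v a * ∑ l, W l b * u l from by rw [hb]; ring]
    rw [Finset.mul_sum]
    exact Finset.sum_congr rfl fun l _ => by ring

lemma main_aux {N k k₁ k₂ : ℕ} (hkN : k < N) (hk₁ : k₁ < k) (hk₂N : k₂ < N)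
    (X : Matrix (Fin N) (Fin k₁) ℝ) (W : Matrix (Fin N) (Fin k₂) ℝ)
    (A : Matrix (Fin N) (Fin N) ℝ) (hA : A.rank ≤ k) :
    ∃ B : Matrix (Fin N) (Fin N) ℝ, B ≠ A ∧ B.rank ≤ k ∧
      B * X = A * X ∧ Bᵀ * W = Aᵀ * W := by
  obtain ⟨u, hu, huW⟩ := exists_ker hk₂N Wᵀ
  rcases hA.lt_or_eq with hlt | heq
  · obtain ⟨v, hv, hvX⟩ := exists_ker (hk₁.trans hkN) Xᵀ
    obtain ⟨hne, hBX, hBW⟩ := shared X W A u v hu hv huW hvX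
    exact ⟨A + vecMulVec u v, hne, (rank_add_vecMulVec_le A u v).trans (by omega), hBX, hBW⟩
  · have hUk : Module.finrank ℝ (LinearMap.range (Aᵀ).mulVecLin) = k := by
      rw [← Matrix.rank, Matrix.rank_transpose, heq]
    have hXrange : Module.finrank ℝ (LinearMap.range (Xᵀ).mulVecLin) ≤ k₁ := by
      have := Submodule.finrank_le (LinearMap.range (Xᵀ).mulVecLin)
      simpa [Module.finrank_fin_fun] using this
    have hker := LinearMap.finrank_range_add_finrank_ker (Xᵀ).mulVecLin
    rw [Module.finrank_fin_fun] at hker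
    have hsup : Module.finrank ℝ (LinearMap.range (Aᵀ).mulVecLin ⊔
        LinearMap.ker (Xᵀ).mulVecLin : Submodule ℝ (Fin N → ℝ)) ≤ N := by
      have := Submodule.finrank_le (LinearMap.range (Aᵀ).mulVecLin ⊔
        LinearMap.ker (Xᵀ).mulVecLin : Submodule ℝ (Fin N → ℝ))
      simpa [Module.finrank_fin_fun] using this
    have hUV := Submodule.finrank_sup_add_finrank_inf_eq
      (LinearMap.range (Aᵀ).mulVecLin) (LinearMap.ker (Xᵀ).mulVecLin)
    have hinf : 0 < Module.finrank ℝ (LinearMap.range (Aᵀ).mulVecLin ⊓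
        LinearMap.ker (Xᵀ).mulVecLin : Submodule ℝ (Fin N → ℝ)) := by omega
    have hne : (LinearMap.range (Aᵀ).mulVecLin ⊓
        LinearMap.ker (Xᵀ).mulVecLin : Submodule ℝ (Fin N → ℝ)) ≠ ⊥ := by
      intro hbot
      rw [hbot] at hinf
      simp at hinf
    obtain ⟨v, hvmem, hv⟩ := Submodule.exists_mem_ne_zero_of_ne_bot hne
    obtain ⟨hvU, hvV⟩ := hvmem
    obtain ⟨w, hw⟩ := hvU
    have hvX : Xᵀ *ᵥ v = 0 := hvV
    obtain ⟨hne', hBX, hBW⟩ := shared X W A u v hu hv huW hvX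
    refine ⟨A + vecMulVec u v, hne', ?_, hBX, hBW⟩
    have hfact : A + vecMulVec u v = (1 + vecMulVec u w) * A := by
      rw [Matrix.add_mul, Matrix.one_mul]
      congr 1
      ext a b
      have hw' : Aᵀ *ᵥ w = v := hw
      have hb : (Aᵀ *ᵥ w) b = v b := congrFun hw' b
      simp only [mulVec, dotProduct, transpose_apply] at hb
      simp only [vecMulVec, of_apply, mul_apply]
      rw [show v b = ∑ l, A l b * w l from hb.symm, Finset.mul_sum]
      exact Finset.sum_congr rfl fun l _ => by ring
    rw [hfact, ← heq]
    exact Matrix.rank_mul_le_right _ _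

theorem stmt1 (N k k₁ k₂ : ℕ) (hk1 : 1 ≤ k) (hkN : k < N)
    (hmin : min k₁ k₂ < k) (hmax : max k₁ k₂ < N)
    (X : Matrix (Fin N) (Fin k₁) ℝ) (W : Matrix (Fin N) (Fin k₂) ℝ)
    (hX : Xᵀ * X = 1) (hW : Wᵀ * W = 1)
    (A : Matrix (Fin N) (Fin N) ℝ) (hA : A.rank ≤ k) :
    ∃ B : Matrix (Fin N) (Fin N) ℝ, B ≠ A ∧ B.rank ≤ k ∧
      B * X = A * X ∧ Bᵀ * W = Aᵀ * W := by
  rcases min_lt_iff.mp hmin with h1 | h2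
  · exact main_aux hkN h1 (lt_of_le_of_lt (le_max_right k₁ k₂) hmax) X W A hA
  · obtain ⟨B', hne, hrk, hBW, hBX⟩ :=
      main_aux hkN h2 (lt_of_le_of_lt (le_max_left k₁ k₂) hmax) W X Aᵀ
        (by rw [Matrix.rank_transpose]; exact hA)
    refine ⟨B'ᵀ, ?_, ?_, ?_, ?_⟩
    · intro h
      apply hne
      rw [← h, transpose_transpose]
    · rw [Matrix.rank_transpose]; exact hrk
    · rw [transpose_transpose] at hBX; exact hBX
    · rw [transpose_transpose]; exact hBW
end

section
/- Let N ≥ 1. For every symmetric matrix A : Matrix (Fin N) (Fin N) ℝ and every family of vectors x : Fin (N-1) → (Fin N → ℝ), there exists a symmetric matrix B : Matrix (Fin N) (Fin N) ℝ with B ≠ A such that B *ᵥ (x j) = A *ᵥ (x j) for all j : Fin (N-1). (An N×N symmetric matrix is never uniquely determined by N−1 matrix-vector product queries.) -/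
open Matrix

theorem stmt2 (N : ℕ) (hN : 1 ≤ N) (A : Matrix (Fin N) (Fin N) ℝ) (hA : A.IsSymm)
    (x : Fin (N - 1) → (Fin N → ℝ)) :
    ∃ B : Matrix (Fin N) (Fin N) ℝ, B.IsSymm ∧ B ≠ A ∧
      ∀ j : Fin (N - 1), B *ᵥ x j = A *ᵥ x j := by
  -- linear map sending v to its dot products with the x j
  set f : (Fin N → ℝ) →ₗ[ℝ] (Fin (N - 1) → ℝ) :=
    { toFun := fun v => fun j => x j ⬝ᵥ v
      map_add' := by intro a b; funext j; simp [dotProduct_add]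
      map_smul' := by intro c a; funext j; simp [dotProduct_smul] } with hf
  have hker : LinearMap.ker f ≠ ⊥ := by
    intro h
    have hinj : Function.Injective f := LinearMap.ker_eq_bot.mp h
    have := LinearMap.finrank_le_finrank_of_injective hinj
    simp only [Module.finrank_pi, Fintype.card_fin] at this
    omega
  obtain ⟨v, hv, hv0⟩ := Submodule.exists_mem_ne_zero_of_ne_bot hker
  have hdot : ∀ j, x j ⬝ᵥ v = 0 := by
    intro j
    have : f v = 0 := hv
    exact congrFun this j
  refine ⟨A + vecMulVec v v, ?_, ?_, ?_⟩
  · unfold Matrix.IsSymm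
    rw [Matrix.transpose_add, hA]
    congr 1
    ext i j
    simp [Matrix.vecMulVec_apply, mul_comm]
  · intro h
    have h0 : vecMulVec v v = 0 := by
      have := congrArg (· - A) h
      simpa using this
    obtain ⟨i, hi⟩ := Function.ne_iff.mp hv0
    have := congrFun (congrFun h0 i) i
    simp only [Matrix.vecMulVec_apply, Pi.zero_apply, Matrix.zero_apply] at this
    exact hi (mul_self_eq_zero.mp this)
  · intro j
    rw [Matrix.add_mulVec]
    have : vecMulVec v v *ᵥ x j = 0 := by
      funext i
      simp only [Matrix.mulVec, dotProduct, Matrix.vecMulVec_apply, Pi.zero_apply]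
      calc ∑ k, v i * v k * x j k = v i * (x j ⬝ᵥ v) := by
            simp only [dotProduct, Finset.mul_sum]
            exact Finset.sum_congr rfl fun k _ => by ring
        _ = 0 := by rw [hdot]; ring
    rw [this]
    simp
end

section
/- Let N ≥ 1. For every orthogonal matrix A : Matrix (Fin N) (Fin N) ℝ (i.e., Aᵀ * A = 1) and every family of vectors x : Fin (N-1) → (Fin N → ℝ), there exists an orthogonal matrix B : Matrix (Fin N) (Fin N) ℝ with B ≠ A such that B *ᵥ (x j) = A *ᵥ (x j) for all j : Fin (N-1). (An N×N orthogonal matrix is never uniquely determined by N−1 matrix-vector product queries; take B = A(I − 2vvᵀ/(vᵀv)) for v a nonzero vector orthogonal to all x j.) -/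
open Matrix

theorem stmt4 (N : ℕ) (hN : 1 ≤ N) (A : Matrix (Fin N) (Fin N) ℝ) (hA : Aᵀ * A = 1)
    (x : Fin (N - 1) → (Fin N → ℝ)) :
    ∃ B : Matrix (Fin N) (Fin N) ℝ, Bᵀ * B = 1 ∧ B ≠ A ∧
      ∀ j : Fin (N - 1), B *ᵥ x j = A *ᵥ x j := by
  -- matrix with rows x j
  set X : Matrix (Fin (N - 1)) (Fin N) ℝ := Matrix.of x with hX
  -- find nonzero v in kernel
  have hnotinj : ¬ Function.Injective X.mulVecLin := by
    intro h
    have := LinearMap.finrank_le_finrank_of_injective h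
    simp [Module.finrank_pi] at this
    omega
  rw [← LinearMap.ker_eq_bot] at hnotinj
  obtain ⟨v, hv, hv0⟩ := Submodule.exists_mem_ne_zero_of_ne_bot hnotinj
  have hXv : X *ᵥ v = 0 := hv
  have hvx : ∀ j, x j ⬝ᵥ v = 0 := fun j => congrFun hXv j
  set s : ℝ := v ⬝ᵥ v with hs
  have hs0 : s ≠ 0 := by
    simpa [hs, dotProduct_self_eq_zero] using hv0
  set c : ℝ := 2 / s with hc
  set M : Matrix (Fin N) (Fin N) ℝ := vecMulVec v v with hM
  have hMM : M * M = s • M := by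
    ext i j
    simp only [hM, Matrix.mul_apply, vecMulVec_apply, Matrix.smul_apply, smul_eq_mul, hs,
      dotProduct]
    rw [Finset.sum_mul]
    exact Finset.sum_congr rfl fun k _ => by ring
  set H : Matrix (Fin N) (Fin N) ℝ := 1 - c • M with hH
  have hMT : Mᵀ = M := by
    ext i j; simp [hM, vecMulVec_apply, mul_comm]
  have hHT : Hᵀ = H := by
    simp [hH, transpose_sub, transpose_smul, hMT]
  have hcs : c * (c * s) = c + c := by
    have hcs' : c * s = 2 := by rw [hc]; exact div_mul_cancel₀ _ hs0
    rw [hcs']; ring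
  have hHH : H * H = 1 := by
    simp only [hH, sub_mul, mul_sub, mul_one, one_mul, Matrix.smul_mul, Matrix.mul_smul, hMM,
      smul_smul, hcs]
    module
  have hMv : M *ᵥ v = s • v := by
    ext i
    simp only [hM, mulVec, vecMulVec_apply, dotProduct, Pi.smul_apply, smul_eq_mul, hs]
    rw [Finset.sum_mul]
    exact Finset.sum_congr rfl fun k _ => by ring
  have hHv : H *ᵥ v = -v := by
    rw [hH, sub_mulVec, one_mulVec, smul_mulVec, hMv, smul_smul, hc,
      div_mul_cancel₀ _ hs0]
    ext i; simp; ring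
  have hMx : ∀ j, M *ᵥ x j = 0 := by
    intro j
    ext i
    have : v ⬝ᵥ x j = 0 := by rw [dotProduct_comm]; exact hvx j
    simp only [hM, mulVec, vecMulVec_apply, dotProduct, Pi.zero_apply]
    calc ∑ k, v i * v k * x j k = v i * ∑ k, v k * x j k := by
          rw [Finset.mul_sum]; exact Finset.sum_congr rfl fun k _ => by ring
      _ = 0 := by simp only [dotProduct] at this; rw [this]; ring
  have hHx : ∀ j, H *ᵥ x j = x j := by
    intro j
    rw [hH, sub_mulVec, one_mulVec, smul_mulVec, hMx j, smul_zero, sub_zero]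
  refine ⟨A * H, ?_, ?_, ?_⟩
  · rw [transpose_mul, hHT, mul_assoc H, ← mul_assoc Aᵀ, hA, one_mul, hHH]
  · intro hBA
    have hAAT : A * Aᵀ = 1 := by rwa [mul_eq_one_comm] at hA
    have hH1 : H = 1 := by
      have := congrArg (fun C => Aᵀ * C) hBA
      simpa [← mul_assoc, hA] using this
    have := hHv
    rw [hH1, one_mulVec] at this
    apply hv0
    ext i
    have := congrFun this i
    simp only [Pi.neg_apply, Pi.zero_apply] at this ⊢
    linarith
  · intro j
    rw [← mulVec_mulVec, hHx j]
end

section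
/- A matrix A : Matrix (Fin N) (Fin N) ℝ is tridiagonal if A i j = 0 whenever the natural numbers i and j satisfy i + 1 < j or j + 1 < i. For r ∈ {0,1,2} let x_r : Fin N → ℝ be the vector with x_r j = 1 if (j : ℕ) % 3 = r and 0 otherwise. If A and B are both tridiagonal and A *ᵥ x_r = B *ᵥ x_r for r = 0, 1, 2, then A = B. (A tridiagonal matrix is uniquely determined by three matrix-vector products with period-3 indicator vectors.) -/
open Matrix

theorem stmt6 (N : ℕ) (A B : Matrix (Fin N) (Fin N) ℝ)
    (hA : ∀ i j : Fin N, ((i : ℕ) + 1 < (j : ℕ) ∨ (j : ℕ) + 1 < (i : ℕ)) → A i j = 0)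
    (hB : ∀ i j : Fin N, ((i : ℕ) + 1 < (j : ℕ) ∨ (j : ℕ) + 1 < (i : ℕ)) → B i j = 0)
    (h : ∀ r : Fin 3,
      A *ᵥ (fun j : Fin N => if (j : ℕ) % 3 = (r : ℕ) then (1 : ℝ) else 0) =
      B *ᵥ (fun j : Fin N => if (j : ℕ) % 3 = (r : ℕ) then (1 : ℝ) else 0)) :
    A = B := by
  ext i j
  by_cases hfar : (i : ℕ) + 1 < (j : ℕ) ∨ (j : ℕ) + 1 < (i : ℕ)
  · rw [hA i j hfar, hB i j hfar]
  · have hr : ((j : ℕ) % 3) < 3 := Nat.mod_lt _ (by norm_num)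
    have hth := congrFun (h ⟨(j : ℕ) % 3, hr⟩) i
    simp only [mulVec, dotProduct] at hth
    have hsum : ∀ C : Matrix (Fin N) (Fin N) ℝ,
        (∀ a b : Fin N, ((a : ℕ) + 1 < (b : ℕ) ∨ (b : ℕ) + 1 < (a : ℕ)) → C a b = 0) →
        (∑ j' : Fin N, C i j' *
          (if (j' : ℕ) % 3 = ((⟨(j : ℕ) % 3, hr⟩ : Fin 3) : ℕ) then (1 : ℝ) else 0)) = C i j := by
      intro C hC
      rw [Finset.sum_eq_single j]
      · simp
      · intro b _ hb
        by_cases hb3 : (b : ℕ) % 3 = (j : ℕ) % 3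
        · have hbj : (b : ℕ) ≠ (j : ℕ) := fun hh => hb (Fin.ext hh)
          rw [hC i b (by omega)]
          ring
        · simp [hb3]
      · intro hj; exact absurd (Finset.mem_univ j) hj
    rw [hsum A hA, hsum B hB] at hth
    exact hth
end

section
/- A matrix A : Matrix (Fin N) (Fin N) ℝ is tridiagonal if A i j = 0 whenever the natural numbers i and j satisfy i + 1 < j or j + 1 < i. For r ∈ {0,1} let x_r : Fin N → ℝ be the vector with x_r j = 1 if (j : ℕ) % 2 = r and 0 otherwise. If A and B are both symmetric (Aᵀ = A and Bᵀ = B) and tridiagonal, and A *ᵥ x_0 = B *ᵥ x_0 and A *ᵥ x_1 = B *ᵥ x_1, then A = B. (A symmetric tridiagonal matrix is uniquely determined by two matrix-vector products with alternating 0–1 vectors.) -/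
open Matrix

private lemma diag_sum {N : ℕ} (M : Matrix (Fin N) (Fin N) ℝ)
    (hM : ∀ i j : Fin N, ((i : ℕ) + 1 < (j : ℕ) ∨ (j : ℕ) + 1 < (i : ℕ)) → M i j = 0)
    (i : Fin N) :
    ∑ j, M i j * (if (j : ℕ) % 2 = (i : ℕ) % 2 then (1 : ℝ) else 0) = M i i := by
  rw [Finset.sum_eq_single i]
  · simp
  · intro j _ hj
    by_cases hp : (j : ℕ) % 2 = (i : ℕ) % 2
    · have hne : (i : ℕ) ≠ (j : ℕ) := fun h => hj (Fin.ext h.symm)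
      rw [hM i j (by omega), zero_mul]
    · simp [hp]
  · simp

private lemma off_sum {N : ℕ} (M : Matrix (Fin N) (Fin N) ℝ)
    (hM : ∀ i j : Fin N, ((i : ℕ) + 1 < (j : ℕ) ∨ (j : ℕ) + 1 < (i : ℕ)) → M i j = 0)
    (k : ℕ) (hk : k + 1 < N)
    (hprev : ∀ h : 0 < k, M ⟨k, by omega⟩ ⟨k - 1, by omega⟩ = 0) :
    ∑ j, M ⟨k, by omega⟩ j * (if (j : ℕ) % 2 = (k + 1) % 2 then (1 : ℝ) else 0)
      = M ⟨k, by omega⟩ ⟨k + 1, hk⟩ := by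
  rw [Finset.sum_eq_single ⟨k + 1, hk⟩]
  · simp
  · intro j _ hj
    have hne : (j : ℕ) ≠ k + 1 := fun h => hj (Fin.ext h)
    by_cases hp : (j : ℕ) % 2 = (k + 1) % 2
    · by_cases htd : (k : ℕ) + 1 < (j : ℕ) ∨ (j : ℕ) + 1 < k
      · rw [hM _ j htd, zero_mul]
      · have hjk : (j : ℕ) = k - 1 ∧ 0 < k := by omega
        have : j = (⟨k - 1, by omega⟩ : Fin N) := Fin.ext hjk.1
        rw [this, hprev hjk.2, zero_mul]
    · simp [hp]
  · simp

theorem stmt7 (N : ℕ) (A B : Matrix (Fin N) (Fin N) ℝ)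
    (hAs : Aᵀ = A) (hBs : Bᵀ = B)
    (hA : ∀ i j : Fin N, ((i : ℕ) + 1 < (j : ℕ) ∨ (j : ℕ) + 1 < (i : ℕ)) → A i j = 0)
    (hB : ∀ i j : Fin N, ((i : ℕ) + 1 < (j : ℕ) ∨ (j : ℕ) + 1 < (i : ℕ)) → B i j = 0)
    (h0 : A *ᵥ (fun j : Fin N => if (j : ℕ) % 2 = 0 then (1 : ℝ) else 0) =
          B *ᵥ (fun j : Fin N => if (j : ℕ) % 2 = 0 then (1 : ℝ) else 0))
    (h1 : A *ᵥ (fun j : Fin N => if (j : ℕ) % 2 = 1 then (1 : ℝ) else 0) =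
          B *ᵥ (fun j : Fin N => if (j : ℕ) % 2 = 1 then (1 : ℝ) else 0)) :
    A = B := by
  set D : Matrix (Fin N) (Fin N) ℝ := A - B with hD
  have hDs : Dᵀ = D := by rw [hD, transpose_sub, hAs, hBs]
  have hDt : ∀ i j : Fin N, ((i : ℕ) + 1 < (j : ℕ) ∨ (j : ℕ) + 1 < (i : ℕ)) → D i j = 0 := by
    intro i j h
    simp [hD, Matrix.sub_apply, hA i j h, hB i j h]
  have hrow : ∀ (i : Fin N) (r : ℕ), r < 2 →
      ∑ j, D i j * (if (j : ℕ) % 2 = r then (1 : ℝ) else 0) = 0 := by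
    intro i r hr2
    have hr : r % 2 = 0 ∨ r % 2 = 1 := Nat.mod_two_eq_zero_or_one r
    have key : ∀ j : Fin N, ((j : ℕ) % 2 = r) = ((j : ℕ) % 2 = r % 2) := by
      intro j; apply propext; constructor <;> intro h <;> omega
    rcases hr with hr | hr
    · have := congrFun h0 i
      simp only [mulVec, dotProduct] at this
      calc ∑ j, D i j * (if (j : ℕ) % 2 = r then (1 : ℝ) else 0)
          = ∑ j, (A i j * (if (j : ℕ) % 2 = 0 then (1:ℝ) else 0)
              - B i j * (if (j : ℕ) % 2 = 0 then (1:ℝ) else 0)) := by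
            apply Finset.sum_congr rfl; intro j _
            simp only [hD, Matrix.sub_apply, sub_mul, key j, hr]
        _ = 0 := by rw [Finset.sum_sub_distrib, this, sub_self]
    · have := congrFun h1 i
      simp only [mulVec, dotProduct] at this
      calc ∑ j, D i j * (if (j : ℕ) % 2 = r then (1 : ℝ) else 0)
          = ∑ j, (A i j * (if (j : ℕ) % 2 = 1 then (1:ℝ) else 0)
              - B i j * (if (j : ℕ) % 2 = 1 then (1:ℝ) else 0)) := by
            apply Finset.sum_congr rfl; intro j _
            simp only [hD, Matrix.sub_apply, sub_mul, key j, hr]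
        _ = 0 := by rw [Finset.sum_sub_distrib, this, sub_self]
  -- diagonal entries vanish
  have hdiag : ∀ i : Fin N, D i i = 0 := by
    intro i
    rw [← diag_sum D hDt i, hrow _ _ (by omega)]
  -- superdiagonal entries vanish, by induction
  have hoff : ∀ k : ℕ, ∀ hk : k + 1 < N, D ⟨k, by omega⟩ ⟨k + 1, hk⟩ = 0 := by
    intro k
    induction k with
    | zero =>
      intro hk
      rw [← off_sum D hDt 0 hk (by intro h; omega), hrow _ _ (by omega)]
    | succ m ih =>
      intro hk
      have hprev : D ⟨m + 1, by omega⟩ ⟨m, by omega⟩ = 0 := by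
        have := ih (by omega)
        have hsym := congrFun (congrFun hDs ⟨m + 1, by omega⟩) ⟨m, by omega⟩
        simp only [Matrix.transpose_apply] at hsym
        rw [← hsym]
        exact this
      have := off_sum D hDt (m + 1) hk (by intro h; simpa using hprev)
      rw [← this, hrow _ _ (by omega)]
  have hzero : D = 0 := by
    ext i j
    simp only [Matrix.zero_apply]
    rcases lt_trichotomy (i : ℕ) (j : ℕ) with h | h | h
    · by_cases hadj : (j : ℕ) = (i : ℕ) + 1
      · have h2 := hoff (i : ℕ) (by omega)
        have hj : (⟨(i : ℕ) + 1, by omega⟩ : Fin N) = j := Fin.ext hadj.symm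
        rw [hj] at h2
        exact h2
      · exact hDt i j (by omega)
    · have : i = j := Fin.ext h
      rw [this]; exact hdiag j
    · by_cases hadj : (i : ℕ) = (j : ℕ) + 1
      · have hsym := congrFun (congrFun hDs i) j
        simp only [Matrix.transpose_apply] at hsym
        rw [← hsym]
        have h2 := hoff (j : ℕ) (by omega)
        have hi : (⟨(j : ℕ) + 1, by omega⟩ : Fin N) = i := Fin.ext hadj.symm
        rw [hi] at h2
        exact h2
      · exact hDt i j (by omega)
  have := sub_eq_zero.mp (hD ▸ hzero)
  exact this
end

section
/- Let N and k be natural numbers and let G, H, X, Y : Matrix (Fin N) (Fin k) ℝ. If the k×k matrices Hᵀ * X and Yᵀ * G are invertible (IsUnit), then (G * Hᵀ * X) * (Yᵀ * G * Hᵀ * X)⁻¹ * (Yᵀ * G * Hᵀ) = G * Hᵀ. (The generalized Nyström formula exactly recovers the rank-≤k matrix G Hᵀ from its products with X and the products of its transpose with Y.) -/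
open Matrix

theorem stmt14 (N k : ℕ) (G H X Y : Matrix (Fin N) (Fin k) ℝ)
    (h1 : IsUnit (Hᵀ * X)) (h2 : IsUnit (Yᵀ * G)) :
    (G * Hᵀ * X) * (Yᵀ * G * Hᵀ * X)⁻¹ * (Yᵀ * G * Hᵀ) = G * Hᵀ := by
  have e : Yᵀ * G * Hᵀ * X = (Yᵀ * G) * (Hᵀ * X) := by rw [Matrix.mul_assoc]
  rw [e, Matrix.mul_inv_rev]
  have d1 : IsUnit (Hᵀ * X).det := (Matrix.isUnit_iff_isUnit_det _).mp h1
  have d2 : IsUnit (Yᵀ * G).det := (Matrix.isUnit_iff_isUnit_det _).mp h2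
  calc G * Hᵀ * X * ((Hᵀ * X)⁻¹ * (Yᵀ * G)⁻¹) * (Yᵀ * G * Hᵀ)
      = G * ((Hᵀ * X) * (Hᵀ * X)⁻¹) * ((Yᵀ * G)⁻¹ * (Yᵀ * G)) * Hᵀ := by
        simp only [Matrix.mul_assoc]
    _ = G * Hᵀ := by
        rw [Matrix.mul_nonsing_inv _ d1, Matrix.nonsing_inv_mul _ d2]
        simp
end

section
/- Let N, s be natural numbers and let A : Matrix (Fin N) (Fin N) ℝ be a matrix with rank A ≤ s. Then for almost every X : Matrix (Fin N) (Fin s) ℝ with respect to the Lebesgue (volume) measure on the space of N×s real matrices, rank (A * X) = rank A. (Multiplying a rank-≤s matrix by a random N×s matrix preserves its rank with probability 1; this is the basis of the randomized SVD recovery guarantee.) -/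
open Matrix MeasureTheory

private lemma aux_null_fin : ∀ (n : ℕ) (p : MvPolynomial (Fin n) ℝ), p ≠ 0 →
    (volume : Measure (Fin n → ℝ)) {x | MvPolynomial.eval x p = 0} = 0 := by
  intro n
  induction n with
  | zero =>
      intro p hp
      obtain ⟨a, rfl⟩ := MvPolynomial.C_surjective (Fin 0) p
      have ha : a ≠ 0 := fun h => hp (by rw [h, map_zero])
      have : {x : Fin 0 → ℝ | MvPolynomial.eval x (MvPolynomial.C a) = 0} = ∅ := by
        ext x; simp [ha]
      rw [this]; exact measure_empty
  | succ n ih =>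
      intro p hp
      set q : Polynomial (MvPolynomial (Fin n) ℝ) := MvPolynomial.finSuccEquiv ℝ n p with hqdef
      have hq : q ≠ 0 := by
        intro h
        apply hp
        have := congrArg (MvPolynomial.finSuccEquiv ℝ n).symm h
        simpa [hqdef] using this
      obtain ⟨k, hk⟩ : ∃ k, q.coeff k ≠ 0 := by
        by_contra h
        push_neg at h
        exact hq (Polynomial.ext fun k => by simp [h k])
      set T : Set (ℝ × (Fin n → ℝ)) :=
        {z | Polynomial.eval z.1 (q.map (MvPolynomial.eval z.2)) = 0} with hTdef
      have hcont : Continuous fun z : ℝ × (Fin n → ℝ) =>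
          Polynomial.eval z.1 (q.map (MvPolynomial.eval z.2)) := by
        have hrw : (fun z : ℝ × (Fin n → ℝ) =>
            Polynomial.eval z.1 (q.map (MvPolynomial.eval z.2)))
            = fun z => ∑ m ∈ q.support, MvPolynomial.eval z.2 (q.coeff m) * z.1 ^ m := by
          funext z
          rw [Polynomial.eval_map, Polynomial.eval₂_eq_sum, Polynomial.sum_def]
        rw [hrw]
        exact continuous_finset_sum _ fun m _ =>
          ((MvPolynomial.continuous_eval (q.coeff m)).comp continuous_snd).mul
            ((continuous_pow m).comp continuous_fst)
      have hT : MeasurableSet T := hcont.measurable (measurableSet_singleton 0)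
      have hpre : {x : Fin (n+1) → ℝ | MvPolynomial.eval x p = 0}
          = (MeasurableEquiv.piFinSuccAbove (fun _ : Fin (n+1) => ℝ) 0) ⁻¹' T := by
        ext x
        have h1 : (MeasurableEquiv.piFinSuccAbove (fun _ : Fin (n+1) => ℝ) 0) x
            = (x 0, Fin.tail x) := by
          simp [MeasurableEquiv.piFinSuccAbove, Fin.removeNth, Fin.tail]
        simp only [Set.mem_preimage, h1, Set.mem_setOf_eq, hTdef]
        conv_lhs => rw [← Fin.cons_self_tail x, MvPolynomial.eval_eq_eval_mv_eval']
      have hmp := MeasureTheory.measurePreserving_piFinSuccAbove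
        (fun _ : Fin (n+1) => (volume : Measure ℝ)) 0
      rw [show (volume : Measure (Fin (n+1) → ℝ)) = Measure.pi fun _ => volume from volume_pi,
        hpre, hmp.measure_preimage hT.nullMeasurableSet]
      have hswap : ((volume : Measure ℝ).prod (Measure.pi fun _ : Fin n => volume)) T
          = (((Measure.pi fun _ : Fin n => volume)).prod (volume : Measure ℝ))
              (Prod.swap ⁻¹' T) := by
        rw [← MeasureTheory.Measure.prod_swap,
          Measure.map_apply measurable_swap hT]
      rw [hswap]
      rw [MeasureTheory.Measure.measure_prod_null (measurable_swap hT)]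
      have hZ : (volume : Measure (Fin n → ℝ))
          {y | MvPolynomial.eval y (q.coeff k) = 0} = 0 := ih _ hk
      rw [show (Measure.pi fun _ : Fin n => (volume : Measure ℝ))
        = (volume : Measure (Fin n → ℝ)) from volume_pi.symm]
      filter_upwards [MeasureTheory.compl_mem_ae_iff.mpr hZ] with y hy
      have hqy : q.map (MvPolynomial.eval y) ≠ 0 := by
        intro h
        apply hy
        have := congrArg (fun r : Polynomial ℝ => r.coeff k) h
        simpa [Polynomial.coeff_map] using this
      have hsec : (Prod.mk y ⁻¹' (Prod.swap ⁻¹' T))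
          = {a : ℝ | (q.map (MvPolynomial.eval y)).IsRoot a} := rfl
      simp only [Pi.zero_apply]
      rw [hsec]
      exact (Polynomial.finite_setOf_isRoot hqy).measure_zero _

private lemma aux_null {ι : Type} [Fintype ι] (p : MvPolynomial ι ℝ) (hp : p ≠ 0) :
    (volume : Measure (ι → ℝ)) {x | MvPolynomial.eval x p = 0} = 0 := by
  classical
  obtain ⟨n, ⟨e⟩⟩ : ∃ n, Nonempty (ι ≃ Fin n) := ⟨Fintype.card ι, ⟨Fintype.equivFin ι⟩⟩
  set m := MeasurableEquiv.piCongrLeft (fun _ : ι => ℝ) e.symm with hm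
  have hS : MeasurableSet {x : ι → ℝ | MvPolynomial.eval x p = 0} :=
    (MvPolynomial.continuous_eval p).measurable (measurableSet_singleton 0)
  have hmg : ∀ g : Fin n → ℝ, (m g) = g ∘ e := by
    intro g
    funext i
    show Equiv.piCongrLeft (fun _ : ι => ℝ) e.symm g i = g (e i)
    conv_lhs => rw [← e.symm_apply_apply i]
    exact Equiv.piCongrLeft_apply_apply (fun _ : ι => ℝ) e.symm g (e i)
  have hpre : ⇑m ⁻¹' {x : ι → ℝ | MvPolynomial.eval x p = 0}
      = {g : Fin n → ℝ | MvPolynomial.eval g (MvPolynomial.rename e p) = 0} := by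
    ext g
    simp only [Set.mem_preimage, Set.mem_setOf_eq, MvPolynomial.eval_rename, hmg g]
  have hmp := (MeasureTheory.volume_measurePreserving_piCongrLeft (fun _ : ι => ℝ) e.symm)
  have h2 := hmp.measure_preimage hS.nullMeasurableSet
  rw [← h2, hpre]
  refine aux_null_fin n _ (fun h => hp ?_)
  have := (MvPolynomial.rename_injective (R := ℝ) e e.injective)
  exact this (by rw [h, map_zero])

private lemma mp_uncurry (N s : ℕ) :
    MeasurePreserving (fun (X : Fin N → Fin s → ℝ) (q : Fin N × Fin s) => X q.1 q.2)
      volume volume := by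
  have hmeas : Measurable (fun (X : Fin N → Fin s → ℝ) (q : Fin N × Fin s) => X q.1 q.2) :=
    measurable_pi_lambda _ fun q => (measurable_pi_apply q.2).comp (measurable_pi_apply q.1)
  refine ⟨hmeas, ?_⟩
  have hv : (volume : Measure (Fin N × Fin s → ℝ)) = Measure.pi fun _ => volume := volume_pi
  rw [hv]
  refine (Measure.pi_eq (μ := fun _ : Fin N × Fin s => (volume : Measure ℝ)) fun E hE => ?_).symm
  rw [Measure.map_apply hmeas (MeasurableSet.univ_pi hE)]
  have hpre : (fun (X : Fin N → Fin s → ℝ) (q : Fin N × Fin s) => X q.1 q.2) ⁻¹'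
      (Set.pi Set.univ E)
      = Set.pi Set.univ fun i => Set.pi Set.univ fun j => E (i, j) := by
    ext X
    simp [Set.mem_pi, Prod.forall]
  rw [hpre, volume_pi_pi]
  simp_rw [volume_pi_pi]
  rw [Fintype.prod_prod_type]

private lemma isUnit_of_rank_eq {r : ℕ} (M : Matrix (Fin r) (Fin r) ℝ) (h : M.rank = r) :
    IsUnit M := by
  rw [Matrix.rank] at h
  have htop : LinearMap.range M.mulVecLin = ⊤ := by
    apply Submodule.eq_top_of_finrank_eq
    rw [h, Module.finrank_fin_fun]
  have hs : Function.Surjective M.mulVec := by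
    intro v
    have : v ∈ LinearMap.range M.mulVecLin := htop ▸ Submodule.mem_top
    obtain ⟨w, hw⟩ := this
    exact ⟨w, hw⟩
  exact Matrix.mulVec_surjective_iff_isUnit.mp hs

theorem stmt16 (N s : ℕ) (A : Matrix (Fin N) (Fin N) ℝ) (hA : A.rank ≤ s) :
    ∀ᵐ X : Fin N → Fin s → ℝ, (A * Matrix.of X).rank = A.rank := by
  classical
  set r := A.rank with hr
  obtain ⟨t, hts, htspan, htind⟩ := exists_linearIndependent ℝ (Set.range Aᵀ)
  have htfin : t.Finite := htind.setFinite
  letI : Fintype t := htfin.fintype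
  have hcardt : Fintype.card t = r := by
    rw [hr, Matrix.rank_eq_finrank_span_cols, Matrix.col, ← htspan, finrank_span_set_eq_card htind,
      Set.toFinset_card]
  have e : Fin r ≃ t := (Fintype.equivFinOfCardEq hcardt).symm
  have hsel : ∀ k : Fin r, ∃ i, Aᵀ i = (e k : Fin N → ℝ) := fun k => hts (e k).2
  set j : Fin r → Fin N := fun k => (hsel k).choose with hj
  have hjspec : ∀ k, Aᵀ (j k) = (e k : Fin N → ℝ) := fun k => (hsel k).choose_spec
  set g : Fin r → Fin s := fun k => Fin.castLE hA k with hg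
  set Esel : Matrix (Fin s) (Fin r) ℝ := Matrix.of fun q k => if q = g k then 1 else 0
    with hEsel
  set Y : (Fin N → Fin s → ℝ) → Matrix (Fin N) (Fin r) ℝ :=
    fun X => (A * Matrix.of X) * Esel with hY
  have hYentry : ∀ (X : Fin N → Fin s → ℝ) i k, Y X i k = (A * Matrix.of X) i (g k) := by
    intro X i k
    rw [hY]
    simp only [Matrix.mul_apply, hEsel, Matrix.of_apply, mul_ite, mul_one, mul_zero]
    simp
  -- the polynomial
  set Ypoly : Matrix (Fin N) (Fin r) (MvPolynomial (Fin N × Fin s) ℝ) :=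
    Matrix.of fun i k => ∑ n : Fin N, MvPolynomial.C (A i n) * MvPolynomial.X (n, g k)
    with hYpoly
  set p : MvPolynomial (Fin N × Fin s) ℝ := (Ypolyᵀ * Ypoly).det with hpd
  have heval : ∀ X : Fin N → Fin s → ℝ,
      MvPolynomial.eval (fun q : Fin N × Fin s => X q.1 q.2) p = ((Y X)ᵀ * (Y X)).det := by
    intro X
    have hmap : Ypoly.map (MvPolynomial.eval fun q : Fin N × Fin s => X q.1 q.2) = Y X := by
      ext i k
      rw [Matrix.map_apply, hYpoly, hYentry X i k]
      simp [Matrix.mul_apply]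
    rw [hpd, RingHom.map_det, RingHom.mapMatrix_apply, Matrix.map_mul, Matrix.transpose_map, hmap]
  -- the witness
  set X₀ : Fin N → Fin s → ℝ :=
    fun i q => if h : (q : ℕ) < r then (if i = j ⟨q, h⟩ then 1 else 0) else 0 with hX₀
  have hYX₀ : ∀ i k, Y X₀ i k = Aᵀ (j k) i := by
    intro i k
    rw [hYentry X₀ i k]
    have hlt : ((g k : Fin s) : ℕ) < r := by
      rw [hg]; simp
    have hfin : (⟨((g k : Fin s) : ℕ), hlt⟩ : Fin r) = k := by
      apply Fin.ext; simp [hg]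
    simp only [Matrix.mul_apply, Matrix.of_apply, hX₀, hlt, dif_pos, hfin]
    simp [Matrix.transpose_apply]
  have hrankY₀ : (Y X₀).rank = r := by
    rw [Matrix.rank_eq_finrank_span_cols]
    have hrange : Set.range (Y X₀)ᵀ = t := by
      have h1 : (Y X₀)ᵀ = fun k => Aᵀ (j k) := by
        funext k i
        rw [Matrix.transpose_apply, hYX₀ i k]
      rw [h1]
      have h2 : (fun k => Aᵀ (j k)) = (fun k => ((e k : Fin N → ℝ))) := by
        funext k; exact hjspec k
      rw [h2, show (fun k => ((e k : Fin N → ℝ))) = (fun v : t => (v : Fin N → ℝ)) ∘ e from rfl,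
        Set.range_comp, e.surjective.range_eq, Set.image_univ, Subtype.range_coe]
    rw [Matrix.col, hrange, htspan, ← Matrix.col, ← Matrix.rank_eq_finrank_span_cols]
  have hdet₀ : ((Y X₀)ᵀ * Y X₀).det ≠ 0 := by
    have h1 : ((Y X₀)ᵀ * Y X₀).rank = r := by
      rw [Matrix.rank_transpose_mul_self, hrankY₀]
    have h2 : IsUnit ((Y X₀)ᵀ * Y X₀) := isUnit_of_rank_eq _ h1
    have h3 := (Matrix.isUnit_iff_isUnit_det _).mp h2
    exact h3.ne_zero
  have hp : p ≠ 0 := by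
    intro h
    apply hdet₀
    rw [← heval X₀, h, map_zero]
  -- measure-zero conclusion
  have hmeas : MeasurableSet {x : Fin N × Fin s → ℝ | MvPolynomial.eval x p = 0} :=
    (MvPolynomial.continuous_eval p).measurable (measurableSet_singleton 0)
  have hpull : (volume : Measure (Fin N → Fin s → ℝ))
      {X | MvPolynomial.eval (fun q : Fin N × Fin s => X q.1 q.2) p = 0} = 0 := by
    have h1 := (mp_uncurry N s).measure_preimage hmeas.nullMeasurableSet
    have h2 : (fun (X : Fin N → Fin s → ℝ) (q : Fin N × Fin s) => X q.1 q.2) ⁻¹'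
        {x : Fin N × Fin s → ℝ | MvPolynomial.eval x p = 0}
        = {X : Fin N → Fin s → ℝ |
            MvPolynomial.eval (fun q : Fin N × Fin s => X q.1 q.2) p = 0} := rfl
    rw [h2] at h1
    rw [h1]
    exact aux_null p hp
  rw [MeasureTheory.ae_iff]
  refine MeasureTheory.measure_mono_null ?_ hpull
  intro X hX
  simp only [Set.mem_setOf_eq] at hX ⊢
  by_contra hne
  apply hX
  have hdet : ((Y X)ᵀ * Y X).det ≠ 0 := by rwa [heval X] at hne
  have hYrank : (Y X).rank = r := by
    rw [← Matrix.rank_transpose_mul_self]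
    have := Matrix.rank_of_isUnit _ ((Matrix.isUnit_iff_isUnit_det _).mpr
      (isUnit_iff_ne_zero.mpr hdet))
    rw [this, Fintype.card_fin]
  have h1 : r ≤ (A * Matrix.of X).rank := by
    calc r = (Y X).rank := hYrank.symm
    _ ≤ (A * Matrix.of X).rank := Matrix.rank_mul_le_left _ _
  exact le_antisymm (Matrix.rank_mul_le_left A (Matrix.of X)) h1
end

section
/- Let A : Matrix (Fin N) (Fin N) ℝ and let p, q, p', q' be natural numbers. Suppose X̃ : Matrix (Fin N) (Fin p) ℝ and W̃ : Matrix (Fin N) (Fin q) ℝ satisfy X̃ᵀ * X̃ = 1 and W̃ᵀ * W̃ = 1, that there exist M₁, M₂ with X̃ = Aᵀ * M₁ and W̃ = A * M₂ (columns of X̃ lie in the column space of Aᵀ and columns of W̃ in the column space of A), and suppose X̂ : Matrix (Fin N) (Fin p') ℝ and Ŵ : Matrix (Fin N) (Fin q') ℝ satisfy A * X̂ = 0 and Aᵀ * Ŵ = 0. Set Ỹ = A * X̃ and Z̃ = Aᵀ * W̃. Then for every C : Matrix (Fin p) (Fin q) ℝ, the matrix B = (fromColumns Ỹ W̃) * (fromBlocks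 (1 - C * Z̃ᵀ * X̃) C ((W̃ᵀ * Ỹ * C - 1) * Z̃ᵀ * X̃) (1 - W̃ᵀ * Ỹ * C)) * (fromRows X̃ᵀ Z̃ᵀ) satisfies B * X̃ = Ỹ, B * X̂ = 0, Bᵀ * W̃ = Z̃, Bᵀ * Ŵ = 0, and rank B ≤ rank A. -/
open Matrix

theorem stmt17 (N p q p' q' : ℕ) (A : Matrix (Fin N) (Fin N) ℝ)
    (Xt : Matrix (Fin N) (Fin p) ℝ) (Wt : Matrix (Fin N) (Fin q) ℝ)
    (hXt : Xtᵀ * Xt = 1) (hWt : Wtᵀ * Wt = 1)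
    (hXcol : ∃ M₁ : Matrix (Fin N) (Fin p) ℝ, Xt = Aᵀ * M₁)
    (hWcol : ∃ M₂ : Matrix (Fin N) (Fin q) ℝ, Wt = A * M₂)
    (Xh : Matrix (Fin N) (Fin p') ℝ) (Wh : Matrix (Fin N) (Fin q') ℝ)
    (hXh : A * Xh = 0) (hWh : Aᵀ * Wh = 0)
    (Yt : Matrix (Fin N) (Fin p) ℝ) (hYt : Yt = A * Xt)
    (Zt : Matrix (Fin N) (Fin q) ℝ) (hZt : Zt = Aᵀ * Wt)
    (C : Matrix (Fin p) (Fin q) ℝ) :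
    ∀ B : Matrix (Fin N) (Fin N) ℝ,
      B = Matrix.fromCols Yt Wt *
          Matrix.fromBlocks (1 - C * Ztᵀ * Xt) C
            ((Wtᵀ * Yt * C - 1) * Ztᵀ * Xt) (1 - Wtᵀ * Yt * C) *
          Matrix.fromRows Xtᵀ Ztᵀ →
      B * Xt = Yt ∧ B * Xh = 0 ∧ Bᵀ * Wt = Zt ∧ Bᵀ * Wh = 0 ∧ B.rank ≤ A.rank := by
  obtain ⟨M₁, hM₁⟩ := hXcol
  obtain ⟨M₂, hM₂⟩ := hWcol
  have hXXh : Xtᵀ * Xh = 0 := by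
    rw [hM₁, transpose_mul, transpose_transpose, Matrix.mul_assoc, hXh, Matrix.mul_zero]
  have hZXh : Ztᵀ * Xh = 0 := by
    rw [hZt, transpose_mul, transpose_transpose, Matrix.mul_assoc, hXh, Matrix.mul_zero]
  have hYWh : Ytᵀ * Wh = 0 := by
    rw [hYt, transpose_mul, Matrix.mul_assoc, hWh, Matrix.mul_zero]
  have hWWh : Wtᵀ * Wh = 0 := by
    rw [hM₂, transpose_mul, Matrix.mul_assoc, hWh, Matrix.mul_zero]
  have hYW : Ytᵀ * Wt = Xtᵀ * Zt := by
    rw [hYt, hZt, transpose_mul, Matrix.mul_assoc]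
  intro B hB
  subst hB
  refine ⟨?_, ?_, ?_, ?_, ?_⟩
  · simp only [Matrix.mul_assoc, fromRows_mul, hXt, fromBlocks_mul_fromRows,
      fromCols_mul_fromRows, Matrix.mul_one]
    simp only [Matrix.sub_mul, Matrix.one_mul, Matrix.mul_sub, Matrix.mul_one, Matrix.mul_assoc,
      Matrix.add_mul, Matrix.mul_add, smul_mul_assoc, mul_smul_comm,
      hXt, hWt, hYW]
    abel
  · simp only [Matrix.mul_assoc, fromRows_mul, hXXh, hZXh, fromRows_zero, Matrix.mul_zero]
  · simp only [transpose_mul, transpose_fromRows, transpose_fromCols, fromBlocks_transpose,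
      transpose_sub, transpose_one, transpose_transpose]
    simp only [Matrix.mul_assoc, fromRows_mul, hYW, hWt, fromBlocks_mul_fromRows,
      fromCols_mul_fromRows, Matrix.mul_one]
    simp only [Matrix.sub_mul, Matrix.one_mul, Matrix.mul_sub, Matrix.mul_one, Matrix.mul_assoc,
      Matrix.add_mul, Matrix.mul_add, smul_mul_assoc, mul_smul_comm,
      hXt, hWt, hYW]
    abel
  · simp only [transpose_mul, transpose_fromRows, transpose_fromCols, fromBlocks_transpose]
    simp only [Matrix.mul_assoc, fromRows_mul, hYWh, hWWh, fromRows_zero, Matrix.mul_zero]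
  · have : Matrix.fromRows Xtᵀ Ztᵀ = Matrix.fromRows M₁ᵀ Wtᵀ * A := by
      rw [fromRows_mul, hM₁, hZt, transpose_mul, transpose_mul, transpose_transpose]
    rw [this, ← Matrix.mul_assoc]
    exact Matrix.rank_mul_le_right _ A
end

section
/- A matrix A : Matrix (Fin N) (Fin N) ℝ is tridiagonal if A i j = 0 whenever the natural numbers i and j satisfy i + 1 < j or j + 1 < i. Let N ≥ 3 and let s, t be natural numbers with s + t ≤ 2. Then for every family of vectors x : Fin s → (Fin N → ℝ) and w : Fin t → (Fin N → ℝ), there exists a nonzero tridiagonal matrix D : Matrix (Fin N) (Fin N) ℝ with D *ᵥ (x i) = 0 for all i : Fin s and Dᵀ *ᵥ (w j) = 0 for all j : Fin t. (Hence a tridiagonal matrix is never uniquely determined by two matrix-vector product queries, so the query complexity of tridiagonal matrices equals 3.) -/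
open Matrix

noncomputable def triL (N : ℕ) :
    ((Fin N → ℝ) × (Fin (N-1) → ℝ) × (Fin (N-1) → ℝ)) →ₗ[ℝ] Matrix (Fin N) (Fin N) ℝ where
  toFun v := fun i j =>
    (if (i:ℕ) = (j:ℕ) then v.1 i else 0) +
    (if h : (i:ℕ)+1 = (j:ℕ) then v.2.1 ⟨i, by have := j.2; omega⟩ else 0) +
    (if h : (j:ℕ)+1 = (i:ℕ) then v.2.2 ⟨j, by have := i.2; omega⟩ else 0)
  map_add' u v := by
    funext i j
    simp only [Prod.fst_add, Prod.snd_add, Pi.add_apply, Matrix.add_apply]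
    erw [Matrix.add_apply]
    split_ifs <;> ring
  map_smul' c v := by
    funext i j
    simp only [Prod.smul_fst, Prod.smul_snd, Pi.smul_apply, Matrix.smul_apply,
      smul_eq_mul, RingHom.id_apply]
    erw [Matrix.smul_apply]
    split_ifs <;> ring

noncomputable def qL (N s t : ℕ) (x : Fin s → Fin N → ℝ) (w : Fin t → Fin N → ℝ) :
    Matrix (Fin N) (Fin N) ℝ →ₗ[ℝ] (Fin s → Fin N → ℝ) × (Fin t → Fin N → ℝ) where
  toFun D := (fun i => D *ᵥ x i, fun j => Dᵀ *ᵥ w j)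
  map_add' A B := by
    ext <;> simp [Matrix.add_mulVec, Matrix.transpose_add]
  map_smul' c A := by
    ext <;> simp [Matrix.smul_mulVec, Matrix.transpose_smul]

lemma triL_inj (N : ℕ) (v) (h : triL N v = 0) : v = 0 := by
  obtain ⟨a, b, c⟩ := v
  have key : ∀ i j : Fin N,
      (if (i:ℕ) = (j:ℕ) then a i else 0) +
      (if h : (i:ℕ)+1 = (j:ℕ) then b ⟨i, by have := j.2; omega⟩ else 0) +
      (if h : (j:ℕ)+1 = (i:ℕ) then c ⟨j, by have := i.2; omega⟩ else 0) = 0 := by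
    intro i j
    exact congrFun (congrFun h i) j
  refine Prod.ext ?_ (Prod.ext ?_ ?_)
  · funext i
    have := key i i
    simpa [dif_neg (show ¬((i:ℕ)+1 = (i:ℕ)) by omega)] using this
  · funext k
    have hk : (k:ℕ) < N := by have := k.2; omega
    have hk1 : (k:ℕ)+1 < N := by have := k.2; omega
    have := key ⟨k, hk⟩ ⟨k+1, hk1⟩
    simp only [if_neg (show ¬((k:ℕ) = (k:ℕ)+1) by omega),
      dif_pos rfl, dif_neg (show ¬((k:ℕ)+1+1 = (k:ℕ)) by omega), zero_add, add_zero] at this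
    simpa using this
  · funext k
    have hk : (k:ℕ) < N := by have := k.2; omega
    have hk1 : (k:ℕ)+1 < N := by have := k.2; omega
    have := key ⟨k+1, hk1⟩ ⟨k, hk⟩
    simp only [if_neg (show ¬((k:ℕ)+1 = (k:ℕ)) by omega),
      dif_neg (show ¬((k:ℕ)+1+1 = (k:ℕ)) by omega), dif_pos rfl, zero_add, add_zero] at this
    simpa using this

theorem stmt18 (N : ℕ) (hN : 3 ≤ N) (s t : ℕ) (hst : s + t ≤ 2)
    (x : Fin s → (Fin N → ℝ)) (w : Fin t → (Fin N → ℝ)) :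
    ∃ D : Matrix (Fin N) (Fin N) ℝ, D ≠ 0 ∧
      (∀ i j : Fin N, ((i : ℕ) + 1 < (j : ℕ) ∨ (j : ℕ) + 1 < (i : ℕ)) → D i j = 0) ∧
      (∀ i : Fin s, D *ᵥ x i = 0) ∧
      (∀ j : Fin t, Dᵀ *ᵥ w j = 0) := by
  set f := (qL N s t x w).comp (triL N) with hf
  have hdom : Module.finrank ℝ ((Fin N → ℝ) × (Fin (N-1) → ℝ) × (Fin (N-1) → ℝ)) = N + ((N-1) + (N-1)) := by
    simp [Module.finrank_prod]
  have hcod : Module.finrank ℝ ((Fin s → Fin N → ℝ) × (Fin t → Fin N → ℝ)) = s * N + t * N := by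
    simp [Module.finrank_prod, Module.finrank_pi_fintype, Finset.sum_const]
  have hlt : Module.finrank ℝ ((Fin s → Fin N → ℝ) × (Fin t → Fin N → ℝ)) <
      Module.finrank ℝ ((Fin N → ℝ) × (Fin (N-1) → ℝ) × (Fin (N-1) → ℝ)) := by
    rw [hdom, hcod]
    have : s * N + t * N ≤ 2 * N := by nlinarith
    omega
  have hker := LinearMap.ker_ne_bot_of_finrank_lt hlt (f := f)
  obtain ⟨v, hv, hv0⟩ := Submodule.exists_mem_ne_zero_of_ne_bot hker
  refine ⟨triL N v, ?_, ?_, ?_, ?_⟩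
  · intro h
    exact hv0 (triL_inj N v h)
  · intro i j hij
    show (if (i:ℕ) = (j:ℕ) then v.1 i else 0) +
      (if h : (i:ℕ)+1 = (j:ℕ) then v.2.1 ⟨i, by have := j.2; omega⟩ else 0) +
      (if h : (j:ℕ)+1 = (i:ℕ) then v.2.2 ⟨j, by have := i.2; omega⟩ else 0) = 0
    rw [if_neg (by omega), dif_neg (by omega), dif_neg (by omega)]
    ring
  · intro i
    have := LinearMap.mem_ker.mp hv
    have h1 := congrArg Prod.fst this
    exact congrFun h1 i
  · intro j
    have := LinearMap.mem_ker.mp hv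
    have h2 := congrArg Prod.snd this
    exact congrFun h2 j
end

section
/- Let N and k be natural numbers and let A, B : Matrix (Fin N) (Fin N) ℝ with rank A ≤ k and rank B ≤ k. Let X, W : Matrix (Fin N) (Fin k) ℝ be such that rank (A * X) = k and rank (Aᵀ * W) = k. If B * X = A * X and Bᵀ * W = Aᵀ * W, then B = A. (A rank-k matrix is uniquely determined among rank-≤k matrices by k well-chosen matrix-vector products with A and k with Aᵀ, so the query complexity of N×N rank-k matrices is exactly 2k.) -/
open Matrix

theorem stmt19 (N k : ℕ) (A B : Matrix (Fin N) (Fin N) ℝ)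
    (hA : A.rank ≤ k) (hB : B.rank ≤ k)
    (X W : Matrix (Fin N) (Fin k) ℝ)
    (hAX : (A * X).rank = k) (hAW : (Aᵀ * W).rank = k)
    (h1 : B * X = A * X) (h2 : Bᵀ * W = Aᵀ * W) :
    B = A := by
  classical
  set S := LinearMap.range A.mulVecLin with hS
  have hrank : ∀ C : Matrix (Fin N) (Fin N) ℝ,
      C.rank = Module.finrank ℝ (LinearMap.range C.mulVecLin) := fun C => rfl
  -- finrank S = rank A
  have hAk : A.rank = k := le_antisymm hA (hAX ▸ rank_mul_le_left A X)
  -- range (A*X) ≤ S and equal by finrank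
  have hle : LinearMap.range (A * X).mulVecLin ≤ S := by
    rw [Matrix.mulVecLin_mul]
    exact LinearMap.range_comp_le_range _ _
  have hSeq : LinearMap.range (A * X).mulVecLin = S := by
    apply Submodule.eq_of_le_of_finrank_le hle
    show Module.finrank ℝ S ≤ (A * X).rank
    rw [hrank A] at hAk
    rw [hAX, hS, hAk]
  -- range B = S
  have hBle : LinearMap.range (A * X).mulVecLin ≤ LinearMap.range B.mulVecLin := by
    rw [← h1, Matrix.mulVecLin_mul]
    exact LinearMap.range_comp_le_range _ _
  have hBeq : LinearMap.range (A * X).mulVecLin = LinearMap.range B.mulVecLin := by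
    apply Submodule.eq_of_le_of_finrank_le hBle
    show B.rank ≤ (A * X).rank
    rw [hAX]; exact hB
  have hBS : LinearMap.range B.mulVecLin = S := hBeq ▸ hSeq
  -- Wᵀ is injective on S
  have hWA : (Wᵀ * A).rank = k := by
    rw [← Matrix.rank_transpose, Matrix.transpose_mul, Matrix.transpose_transpose, hAW]
  set f := (Wᵀ).mulVecLin with hf
  have hmap : Submodule.map f S = LinearMap.range (Wᵀ * A).mulVecLin := by
    rw [Matrix.mulVecLin_mul, LinearMap.range_comp, hS]
  have hinj : ∀ x ∈ S, f x = 0 → x = 0 := by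
    intro x hx hfx
    set g := f.domRestrict S with hg
    have hker : LinearMap.ker g = ⊥ := by
      have h1' : Module.finrank ℝ (LinearMap.range g) + Module.finrank ℝ (LinearMap.ker g)
          = Module.finrank ℝ S := LinearMap.finrank_range_add_finrank_ker g
      have h2' : LinearMap.range g = Submodule.map f S := by
        rw [hg]
        exact LinearMap.range_domRestrict S f
      have h3' : Module.finrank ℝ (LinearMap.range g) = k := by
        rw [h2', hmap]
        exact hWA
      have h4' : Module.finrank ℝ S = k := by rw [hrank A] at hAk; rw [hS]; exact hAk
      have : Module.finrank ℝ (LinearMap.ker g) = 0 := by omega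
      exact Submodule.finrank_eq_zero.mp this
    have : g ⟨x, hx⟩ = 0 := hfx
    have := (LinearMap.ker_eq_bot.mp hker) (by simpa using this : g ⟨x, hx⟩ = g 0)
    exact congrArg Subtype.val this
  -- main argument
  have key : ∀ v : Fin N → ℝ, B.mulVec v = A.mulVec v := by
    intro v
    have hmem : B.mulVec v - A.mulVec v ∈ S := by
      apply Submodule.sub_mem
      · rw [← hBS]; exact ⟨v, rfl⟩
      · exact ⟨v, rfl⟩
    rw [← hSeq] at hmem
    obtain ⟨p, hp⟩ := hmem
    have hWeq : Wᵀ * B = Wᵀ * A := by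
      have := congrArg Matrix.transpose h2
      simpa [Matrix.transpose_mul] using this
    have hfz : f ((A * X).mulVecLin p) = 0 := by
      rw [hp, hf]
      simp only [Matrix.mulVecLin_apply, Matrix.mulVec_sub]
      rw [Matrix.mulVec_mulVec, Matrix.mulVec_mulVec, hWeq, sub_self]
    have : (A * X).mulVecLin p = 0 := hinj _ (hle ⟨p, rfl⟩) hfz
    have hz : B.mulVec v - A.mulVec v = 0 := hp ▸ this
    exact sub_eq_zero.mp hz
  ext i j
  have := congrFun (key (Pi.single j 1)) i
  simpa [Matrix.mulVec_single] using this
end
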